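/- Let S(u,v) := sup_{θ,τ∈ℝ} ( uθ + vτ − G(θ,τ) ) be the convex conjugate (Legendre transform) of G. Then the set D := { (u,v) ∈ ℝ² : S(u,v) < ∞ } equals the convex hull of the finite set { (ζ(ω), η(ω)) : ω ∈ Ω }. -/

import Mathlib

open scoped BigOperators

noncomputable section

namespace Stmt4

variable {Ω : Type} [Fintype Ω]

def Gfun (π : Ω → ℝ) (ζ η : Ω → ℤ) (θ τ : ℝ) : ℝ :=
  Real.log (∑ ω : Ω, Real.exp (θ * (ζ ω : ℝ) + τ * (η ω : ℝ)) * π ω)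

/-- The Legendre transform (convex conjugate) of `G`, with values in `EReal`
(the supremum may be `+∞`). -/
def Sfun (π : Ω → ℝ) (ζ η : Ω → ℤ) (p : ℝ × ℝ) : EReal :=
  ⨆ q : ℝ × ℝ, ((p.1 * q.1 + p.2 * q.2 - Gfun π ζ η q.1 q.2 : ℝ) : EReal)

/-- **The physical domain**: the finiteness domain `D = {(u,v) : S(u,v) < ∞}` of
the Legendre transform of `G` equals the convex hull of `{(ζ(ω),η(ω)) : ω ∈ Ω}`. -/
theorem legendre_domain_eq_convexHull
    (ζ η : Ω → ℤ) (π : Ω → ℝ)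
    (hπpos : ∀ ω, 0 < π ω) (hπsum : ∑ ω : Ω, π ω = 1) :
    {p : ℝ × ℝ | Sfun π ζ η p < ⊤} =
      convexHull ℝ {p : ℝ × ℝ | ∃ ω : Ω, p = ((ζ ω : ℝ), (η ω : ℝ))} := by
  have hΩ : Nonempty Ω := by
    by_contra h
    rw [not_nonempty_iff] at h
    rw [Finset.univ_eq_empty, Finset.sum_empty] at hπsum
    norm_num at hπsum
  have hne : (Finset.univ : Finset Ω).Nonempty := Finset.univ_nonempty
  set A : Set (ℝ × ℝ) := {p : ℝ × ℝ | ∃ ω : Ω, p = ((ζ ω : ℝ), (η ω : ℝ))} with hA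
  have hAfin : A.Finite := by
    have : A = Set.range (fun ω : Ω => ((ζ ω : ℝ), (η ω : ℝ))) := by
      ext x; simp [hA, eq_comm, Set.mem_setOf_eq]
    rw [this]; exact Set.finite_range _
  apply Set.Subset.antisymm
  · -- S < ⊤ → p ∈ hull, by contraposition via separation
    intro p hp
    simp only [Set.mem_setOf_eq] at hp
    by_contra hpK
    have hclosed : IsClosed (convexHull ℝ A) :=
      (hAfin.isCompact_convexHull (𝕜 := ℝ)).isClosed
    obtain ⟨f, u, hfu, hup⟩ :=
      geometric_hahn_banach_closed_point (convex_convexHull ℝ A) hclosed hpK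
    have hf : ∀ v : ℝ × ℝ, f v = v.1 * f (1, 0) + v.2 * f (0, 1) := by
      intro v
      have hv : v = v.1 • ((1 : ℝ), (0 : ℝ)) + v.2 • ((0 : ℝ), (1 : ℝ)) := by
        ext <;> simp
      conv_lhs => rw [hv]
      rw [map_add, map_smul, map_smul, smul_eq_mul, smul_eq_mul]
    have hd : 0 < f p - u := by linarith
    have htop : Sfun π ζ η p = ⊤ := by
      rw [Sfun, iSup_eq_top]
      intro b hb
      obtain ⟨x, hbx, -⟩ := EReal.lt_iff_exists_real_btwn.1 hb
      set t : ℝ := max (x / (f p - u)) 0 with ht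
      have ht0 : 0 ≤ t := le_max_right _ _
      have htx : x ≤ t * (f p - u) := by
        have : x / (f p - u) ≤ t := le_max_left _ _
        calc x = (x / (f p - u)) * (f p - u) := by field_simp
          _ ≤ t * (f p - u) := by nlinarith
      refine ⟨(t * f (1, 0), t * f (0, 1)), ?_⟩
      -- bound the value from below by x
      have hGle : Gfun π ζ η (t * f (1, 0)) (t * f (0, 1)) ≤ t * u := by
        have hterm : ∀ ω : Ω,
            Real.exp ((t * f (1, 0)) * (ζ ω : ℝ) + (t * f (0, 1)) * (η ω : ℝ)) * π ω
              ≤ Real.exp (t * u) * π ω := by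
          intro ω
          have hmem : ((ζ ω : ℝ), (η ω : ℝ)) ∈ convexHull ℝ A :=
            subset_convexHull ℝ A ⟨ω, rfl⟩
          have hlt : f ((ζ ω : ℝ), (η ω : ℝ)) < u := hfu _ hmem
          have hexp : (t * f (1, 0)) * (ζ ω : ℝ) + (t * f (0, 1)) * (η ω : ℝ)
              = t * f ((ζ ω : ℝ), (η ω : ℝ)) := by
            rw [hf ((ζ ω : ℝ), (η ω : ℝ))]; ring
          rw [hexp]
          have : t * f ((ζ ω : ℝ), (η ω : ℝ)) ≤ t * u :=
            mul_le_mul_of_nonneg_left hlt.le ht0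
          exact mul_le_mul_of_nonneg_right (Real.exp_le_exp.2 this) (hπpos ω).le
        have hsumle : (∑ ω : Ω, Real.exp ((t * f (1, 0)) * (ζ ω : ℝ)
              + (t * f (0, 1)) * (η ω : ℝ)) * π ω) ≤ Real.exp (t * u) := by
          calc (∑ ω : Ω, Real.exp ((t * f (1, 0)) * (ζ ω : ℝ)
              + (t * f (0, 1)) * (η ω : ℝ)) * π ω)
              ≤ ∑ ω : Ω, Real.exp (t * u) * π ω := Finset.sum_le_sum fun ω _ => hterm ω
            _ = Real.exp (t * u) * ∑ ω : Ω, π ω := by rw [Finset.mul_sum]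
            _ = Real.exp (t * u) := by rw [hπsum, mul_one]
        calc Gfun π ζ η (t * f (1, 0)) (t * f (0, 1))
            ≤ Real.log (Real.exp (t * u)) := Real.log_le_log
              (Finset.sum_pos (fun ω _ => mul_pos (Real.exp_pos _) (hπpos ω)) hne) hsumle
          _ = t * u := Real.log_exp _
      have hval : x ≤ p.1 * (t * f (1, 0)) + p.2 * (t * f (0, 1))
          - Gfun π ζ η (t * f (1, 0)) (t * f (0, 1)) := by
        have hpq : p.1 * (t * f (1, 0)) + p.2 * (t * f (0, 1)) = t * f p := by
          rw [hf p]; ring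
        rw [hpq]
        nlinarith
      calc b < (x : EReal) := hbx
        _ ≤ _ := EReal.coe_le_coe_iff.2 hval
    rw [htop] at hp
    exact lt_irrefl _ hp
  · -- hull ⊆ {S < ⊤}
    intro p hp
    set m : ℝ := Finset.univ.inf' hne (fun ω => Real.log (π ω)) with hm
    have hbound : Sfun π ζ η p ≤ ((-m : ℝ) : EReal) := by
      refine iSup_le fun q => EReal.coe_le_coe_iff.2 ?_
      set g : Ω → ℝ := fun ω => q.1 * (ζ ω : ℝ) + q.2 * (η ω : ℝ) with hg
      obtain ⟨ω₀, -, hω₀⟩ := Finset.exists_mem_eq_sup' hne g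
      -- p·q ≤ sup g
      have hpq : p.1 * q.1 + p.2 * q.2 ≤ Finset.univ.sup' hne g := by
        have hsub : convexHull ℝ A ⊆
            {x : ℝ × ℝ | x.1 * q.1 + x.2 * q.2 ≤ Finset.univ.sup' hne g} := by
          apply convexHull_min
          · rintro x ⟨ω, rfl⟩
            have := Finset.le_sup' g (Finset.mem_univ ω)
            have h2 : g ω = (ζ ω : ℝ) * q.1 + (η ω : ℝ) * q.2 := by simp only [hg]; ring
            show (ζ ω : ℝ) * q.1 + (η ω : ℝ) * q.2 ≤ _
            rw [← h2]; exact this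
          · refine convex_halfSpace_le ⟨?_, ?_⟩ _
            · intro a b; simp; ring
            · intro c a; simp; ring
        exact hsub hp
      -- G q ≥ g ω₀ + log π ω₀
      have hGge : g ω₀ + Real.log (π ω₀) ≤ Gfun π ζ η q.1 q.2 := by
        have hsingle : Real.exp (g ω₀) * π ω₀
            ≤ ∑ ω : Ω, Real.exp (q.1 * (ζ ω : ℝ) + q.2 * (η ω : ℝ)) * π ω := by
          refine Finset.single_le_sum (f := fun ω =>
            Real.exp (q.1 * (ζ ω : ℝ) + q.2 * (η ω : ℝ)) * π ω) ?_ (Finset.mem_univ ω₀)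
          intro ω _; exact (mul_pos (Real.exp_pos _) (hπpos ω)).le
        calc g ω₀ + Real.log (π ω₀)
            = Real.log (Real.exp (g ω₀) * π ω₀) := by
              rw [Real.log_mul (Real.exp_ne_zero _) (hπpos ω₀).ne', Real.log_exp]
          _ ≤ Gfun π ζ η q.1 q.2 := Real.log_le_log (mul_pos (Real.exp_pos _) (hπpos ω₀)) hsingle
      have hmle : m ≤ Real.log (π ω₀) := Finset.inf'_le _ (Finset.mem_univ ω₀)
      have := hω₀ ▸ hpq
      linarith
    exact lt_of_le_of_lt hbound (EReal.coe_lt_top _)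

end Stmt4
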